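/- The differential operator D_k defined by D_k f = V^{-1} (Σ_{j=1}^N (u_j ∂/∂u_j)^k)(V·f), where V = ∏_{i<j}(u_i − u_j) is the Vandermonde determinant, has the Schur polynomials as eigenfunctions: D_k s_λ(u_1,…,u_N) = (Σ_{i=1}^N (λ_i + N − i)^k) · s_λ(u_1,…,u_N). -/

import Mathlib

open scoped BigOperators
open MvPolynomial

/-- The complete homogeneous symmetric polynomial `h_r` in `N` variables. -/
noncomputable def hsymP (N : ℕ) (r : ℕ) : MvPolynomial (Fin N) ℂ :=
  ∑ m : Fin N → Fin (r + 1),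
    if (∑ i, (m i : ℕ)) = r then ∏ i, (X i) ^ (m i : ℕ) else 0

/-- `h_k` for an integer index `k`, equal to `0` for negative `k`. -/
noncomputable def hsymPZ (N : ℕ) (z : ℤ) : MvPolynomial (Fin N) ℂ :=
  if z < 0 then 0 else hsymP N z.toNat

/-- The Schur polynomial `s_λ` in `N` variables via the Jacobi–Trudi formula. -/
noncomputable def schurP (N : ℕ) (lam : Fin N → ℕ) : MvPolynomial (Fin N) ℂ :=
  Matrix.det (Matrix.of fun i j : Fin N =>
    hsymPZ N ((lam i : ℤ) + (j : ℤ) - (i : ℤ)))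

/-- The Vandermonde polynomial `V = ∏_{i<j} (u_i − u_j)`. -/
noncomputable def vandP (N : ℕ) : MvPolynomial (Fin N) ℂ :=
  ∏ p ∈ Finset.univ.filter (fun p : Fin N × Fin N => p.1 < p.2), (X p.1 - X p.2)

/-- The Euler operator `u_j ∂/∂u_j` on polynomials. -/
noncomputable def eulerOp (N : ℕ) (j : Fin N) (f : MvPolynomial (Fin N) ℂ) :
    MvPolynomial (Fin N) ℂ :=
  X j * pderiv j f

open Finset


lemma eulerOp_monomial {N : ℕ} (j : Fin N) (d : Fin N →₀ ℕ) (c : ℂ) :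
    eulerOp N j (monomial d c) = (d j : ℂ) • monomial d c := by
  unfold eulerOp
  rw [pderiv_monomial]
  by_cases h : d j = 0
  · simp [h]
  · have hd : Finsupp.single j 1 + (d - Finsupp.single j 1) = d := by
      ext t
      by_cases ht : t = j
      · subst ht
        simp only [Finsupp.coe_add, Finsupp.coe_tsub, Pi.add_apply, Pi.sub_apply,
          Finsupp.single_eq_same]
        omega
      · simp [Finsupp.single_apply, Ne.symm ht]
    rw [show (X j : MvPolynomial (Fin N) ℂ) = X j ^ 1 from (pow_one _).symm,
      ← monomial_single_add, hd, smul_monomial]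
    congr 1
    rw [mul_comm]; simp [smul_eq_mul]

noncomputable def eulerLM (N : ℕ) (j : Fin N) :
    MvPolynomial (Fin N) ℂ →ₗ[ℂ] MvPolynomial (Fin N) ℂ where
  toFun := eulerOp N j
  map_add' f g := by simp [eulerOp, mul_add]
  map_smul' c f := by simp [eulerOp, mul_smul_comm]

lemma eulerOp_iterate_eq {N : ℕ} (j : Fin N) (k : ℕ) (f : MvPolynomial (Fin N) ℂ) :
    (eulerOp N j)^[k] f = ((eulerLM N j) ^ k) f := by
  rw [Module.End.pow_apply]; rfl

lemma eulerOp_iterate_monomial {N : ℕ} (j : Fin N) (k : ℕ) (d : Fin N →₀ ℕ) (c : ℂ) :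
    (eulerOp N j)^[k] (monomial d c) = ((d j : ℂ) ^ k) • monomial d c := by
  induction k with
  | zero => simp
  | succ k ih =>
    rw [Function.iterate_succ_apply', ih]
    have : eulerOp N j (((d j : ℂ) ^ k) • monomial d c)
        = ((d j : ℂ) ^ k) • eulerOp N j (monomial d c) := map_smul (eulerLM N j) _ _
    rw [this, eulerOp_monomial, smul_smul, pow_succ, mul_comm]

lemma sum_euler_iterate_monomial {N : ℕ} (k : ℕ) (d : Fin N →₀ ℕ) :
    ∑ j : Fin N, (eulerOp N j)^[k] (monomial d (1:ℂ))
      = C (∑ j : Fin N, (d j : ℂ) ^ k) * monomial d 1 := by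
  rw [← smul_eq_C_mul, Finset.sum_smul]
  exact Finset.sum_congr rfl fun j _ => eulerOp_iterate_monomial j k d 1



lemma prod_X_pow {N : ℕ} (ν : Fin N → ℕ) :
    (∏ i : Fin N, (X i : MvPolynomial (Fin N) ℂ) ^ ν i)
      = monomial (Finsupp.equivFunOnFinite.symm ν) 1 := by
  rw [monomial_eq, C_1, one_mul, Finsupp.prod_fintype]
  · exact Finset.prod_congr rfl fun i _ => by simp
  · intro i; simp


/-- eigen equation for the alternant determinant -/
lemma eig_det {N : ℕ} (μ : Fin N → ℕ) (k : ℕ) :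
    ∑ j : Fin N, (eulerOp N j)^[k]
        ((Matrix.of fun i j : Fin N => (X i : MvPolynomial (Fin N) ℂ) ^ μ j).det)
      = C (∑ i : Fin N, (μ i : ℂ) ^ k)
          * (Matrix.of fun i j : Fin N => (X i : MvPolynomial (Fin N) ℂ) ^ μ j).det := by
  have hterm : ∀ σ : Equiv.Perm (Fin N),
      (∏ i : Fin N, (Matrix.of fun i j : Fin N => (X i : MvPolynomial (Fin N) ℂ) ^ μ j) (σ i) i)
        = monomial (Finsupp.equivFunOnFinite.symm (fun i => μ (σ⁻¹ i))) 1 := by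
    intro σ
    rw [← prod_X_pow]
    calc (∏ i : Fin N, (X (σ i) : MvPolynomial (Fin N) ℂ) ^ μ i)
        = ∏ i : Fin N, (X (σ i) : MvPolynomial (Fin N) ℂ) ^ μ (σ⁻¹ (σ i)) := by
          simp
      _ = ∏ i : Fin N, (X i : MvPolynomial (Fin N) ℂ) ^ μ (σ⁻¹ i) :=
          Equiv.prod_comp σ (fun t => (X t : MvPolynomial (Fin N) ℂ) ^ μ (σ⁻¹ t))
  rw [Matrix.det_apply]
  have step : ∀ j : Fin N, (eulerOp N j)^[k]
      (∑ σ : Equiv.Perm (Fin N), Equiv.Perm.sign σ •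
        ∏ i : Fin N, (Matrix.of fun i j : Fin N => (X i : MvPolynomial (Fin N) ℂ) ^ μ j) (σ i) i)
      = ∑ σ : Equiv.Perm (Fin N), Equiv.Perm.sign σ •
          (eulerOp N j)^[k] (∏ i : Fin N,
            (Matrix.of fun i j : Fin N => (X i : MvPolynomial (Fin N) ℂ) ^ μ j) (σ i) i) := by
    intro j
    rw [eulerOp_iterate_eq, map_sum]
    refine Finset.sum_congr rfl fun σ _ => ?_
    rw [Units.smul_def, Units.smul_def, map_zsmul, eulerOp_iterate_eq]
  simp only [step]
  rw [Finset.sum_comm]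
  rw [Finset.mul_sum]
  refine Finset.sum_congr rfl fun σ _ => ?_
  rw [← Finset.smul_sum]
  simp only [hterm]
  rw [sum_euler_iterate_monomial]
  have hval : (∑ j : Fin N, ((Finsupp.equivFunOnFinite.symm fun i => μ (σ⁻¹ i)) j : ℂ) ^ k)
      = ∑ i : Fin N, (μ i : ℂ) ^ k := by
    simp only [Finsupp.coe_equivFunOnFinite_symm]
    exact Equiv.sum_comp σ⁻¹ (fun t => ((μ t : ℂ)) ^ k)
  rw [hval, Units.smul_def, Units.smul_def, zsmul_eq_mul, zsmul_eq_mul]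
  ring


noncomputable def hPart (N : ℕ) (S : Finset (Fin N)) (r : ℕ) : MvPolynomial (Fin N) ℂ :=
  ∑ d ∈ (Finset.Nat.antidiagonalTuple N r).filter (fun d => ∀ j, j ∉ S → d j = 0),
    ∏ i, (X i : MvPolynomial (Fin N) ℂ) ^ d i

noncomputable def hPartZ (N : ℕ) (S : Finset (Fin N)) (z : ℤ) : MvPolynomial (Fin N) ℂ :=
  if z < 0 then 0 else hPart N S z.toNat

noncomputable def eP (N : ℕ) (S : Finset (Fin N)) (k : ℕ) : MvPolynomial (Fin N) ℂ :=
  ∑ T ∈ S.powersetCard k, ∏ j ∈ T, X j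

lemma eP_zero {N : ℕ} (S : Finset (Fin N)) : eP N S 0 = 1 := by
  simp [eP]

lemma eP_of_card_lt {N : ℕ} {S : Finset (Fin N)} {k : ℕ} (h : S.card < k) :
    eP N S k = 0 := by
  rw [eP, Finset.powersetCard_eq_empty.mpr h, Finset.sum_empty]

lemma eP_insert {N : ℕ} {S : Finset (Fin N)} {y : Fin N} (hy : y ∉ S) (k : ℕ) :
    eP N (insert y S) (k+1) = eP N S (k+1) + X y * eP N S k := by
  rw [eP, Finset.powersetCard_succ_insert hy, Finset.sum_union, eP]
  · congr 1
    rw [Finset.sum_image, eP, Finset.mul_sum]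
    · refine Finset.sum_congr rfl fun T hT => ?_
      rw [Finset.prod_insert]
      intro hyT
      exact hy ((Finset.mem_powersetCard.mp hT).1 hyT)
    · intro T1 h1 T2 h2 he
      have k1 : y ∉ T1 := fun c => hy ((Finset.mem_powersetCard.mp h1).1 c)
      have k2 : y ∉ T2 := fun c => hy ((Finset.mem_powersetCard.mp h2).1 c)
      rw [← Finset.erase_insert k1, ← Finset.erase_insert k2, he]
  · rw [Finset.disjoint_right]
    intro T hT hT'
    obtain ⟨T0, hT0, rfl⟩ := Finset.mem_image.mp hT
    exact hy ((Finset.mem_powersetCard.mp hT').1 (Finset.mem_insert_self y T0))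

lemma hPart_zero {N : ℕ} (S : Finset (Fin N)) : hPart N S 0 = 1 := by
  rw [hPart, Finset.Nat.antidiagonalTuple_zero_right]
  rw [Finset.filter_true_of_mem (by intro d hd; simp at hd; simp [hd])]
  simp

lemma hPart_singleton {N : ℕ} (i : Fin N) (r : ℕ) :
    hPart N {i} r = (X i : MvPolynomial (Fin N) ℂ) ^ r := by
  have hset : (Finset.Nat.antidiagonalTuple N r).filter
      (fun d => ∀ j, j ∉ ({i} : Finset (Fin N)) → d j = 0)
      = {fun t => if t = i then r else 0} := by
    ext d
    simp only [Finset.mem_filter, Finset.Nat.mem_antidiagonalTuple, Finset.mem_singleton,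
      Finset.mem_singleton]
    constructor
    · rintro ⟨hsum, hsupp⟩
      have hdi : d i = r := by
        rw [← hsum]
        exact (Finset.sum_eq_single i (fun b _ hb => hsupp b hb)
          (fun h => absurd (Finset.mem_univ i) h)).symm
      funext t
      by_cases ht : t = i
      · subst ht; simp [hdi]
      · simp [ht, hsupp t ht]
    · rintro rfl
      constructor
      · simp [Finset.sum_ite_eq']
      · intro j hj; simp [hj]
  rw [hPart, hset, Finset.sum_singleton]
  rw [Finset.prod_eq_single i]
  · simp
  · intro b _ hb; simp [hb]
  · intro h; exact absurd (Finset.mem_univ i) h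

lemma hPart_erase_rec {N : ℕ} {S : Finset (Fin N)} {y : Fin N} (hy : y ∈ S) (r : ℕ) :
    hPart N S (r+1) = hPart N (S.erase y) (r+1) + X y * hPart N S r := by
  rw [hPart, ← Finset.sum_filter_add_sum_filter_not _ (fun d => d y = 0)]
  congr 1
  · rw [hPart, Finset.filter_filter]
    apply Finset.sum_congr _ (fun _ _ => rfl)
    apply Finset.filter_congr
    intro d _
    constructor
    · rintro ⟨h1, h2⟩ j hj
      by_cases hjy : j = y
      · subst hjy; exact h2
      · exact h1 j (fun c => hj (Finset.mem_erase.mpr ⟨hjy, c⟩))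
    · intro h
      constructor
      · intro j hj
        exact h j (fun c => hj (Finset.mem_of_mem_erase c))
      · exact h y (fun c => (Finset.mem_erase.mp c).1 rfl)
  · rw [hPart, Finset.mul_sum]
    refine Finset.sum_nbij' (fun d => Function.update d y (d y - 1))
      (fun d => Function.update d y (d y + 1)) ?_ ?_ ?_ ?_ ?_
    · intro d hd
      simp only [Finset.mem_filter, Finset.Nat.mem_antidiagonalTuple] at hd ⊢
      obtain ⟨⟨hsum, hsupp⟩, hdy⟩ := hd
      have hsp : ∀ t, t ∈ Finset.univ.erase y → Function.update d y (d y - 1) t = d t := by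
        intro t ht
        rw [Function.update_of_ne (Finset.mem_erase.mp ht).1]
      constructor
      · have h1 : ∑ t, d t = d y + ∑ t ∈ Finset.univ.erase y, d t := by
          rw [Finset.add_sum_erase _ _ (Finset.mem_univ y)]
        have h2 : ∑ t, Function.update d y (d y - 1) t
            = (d y - 1) + ∑ t ∈ Finset.univ.erase y, d t := by
          rw [← Finset.add_sum_erase _ _ (Finset.mem_univ y), Function.update_self,
            Finset.sum_congr rfl hsp]
        omega
      · intro j hj
        have hjy : j ≠ y := fun c => hj (c ▸ hy)
        rw [Function.update_of_ne hjy]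
        exact hsupp j hj
    · intro d hd
      simp only [Finset.mem_filter, Finset.Nat.mem_antidiagonalTuple] at hd ⊢
      obtain ⟨hsum, hsupp⟩ := hd
      have hsp : ∀ t, t ∈ Finset.univ.erase y → Function.update d y (d y + 1) t = d t := by
        intro t ht
        rw [Function.update_of_ne (Finset.mem_erase.mp ht).1]
      refine ⟨⟨?_, ?_⟩, ?_⟩
      · have h1 : ∑ t, d t = d y + ∑ t ∈ Finset.univ.erase y, d t := by
          rw [Finset.add_sum_erase _ _ (Finset.mem_univ y)]
        have h2 : ∑ t, Function.update d y (d y + 1) t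
            = (d y + 1) + ∑ t ∈ Finset.univ.erase y, d t := by
          rw [← Finset.add_sum_erase _ _ (Finset.mem_univ y), Function.update_self,
            Finset.sum_congr rfl hsp]
        omega
      · intro j hj
        have hjy : j ≠ y := fun c => hj (c ▸ hy)
        rw [Function.update_of_ne hjy]
        exact hsupp j hj
      · simp
    · intro d hd
      simp only [Finset.mem_filter] at hd
      have hd2 := hd.2
      funext t
      by_cases ht : t = y
      · subst ht
        simp only [Function.update_self]
        omega
      · rw [Function.update_of_ne ht, Function.update_of_ne ht]
    · intro d _
      funext t
      by_cases ht : t = y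
      · subst ht; simp
      · rw [Function.update_of_ne ht, Function.update_of_ne ht]
    · intro d hd
      simp only [Finset.mem_filter] at hd
      have hd1 : d y ≠ 0 := hd.2
      rw [← Finset.mul_prod_erase _ _ (Finset.mem_univ y),
        ← Finset.mul_prod_erase _ (fun t => (X t:MvPolynomial (Fin N) ℂ) ^ Function.update d y (d y - 1) t) (Finset.mem_univ y)]
      rw [Function.update_self]
      have hsp : ∏ t ∈ Finset.univ.erase y, (X t:MvPolynomial (Fin N) ℂ) ^ Function.update d y (d y - 1) t
          = ∏ t ∈ Finset.univ.erase y, (X t:MvPolynomial (Fin N) ℂ) ^ d t := by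
        refine Finset.prod_congr rfl fun t ht => ?_
        rw [Function.update_of_ne (Finset.mem_erase.mp ht).1]
      rw [hsp, ← mul_assoc, ← pow_succ']
      congr 2
      omega


lemma hsymP_eq_hPart_univ (N r : ℕ) : hsymP N r = hPart N Finset.univ r := by
  have hR : hPart N Finset.univ r
      = ∑ d ∈ Finset.Nat.antidiagonalTuple N r, ∏ i, (X i : MvPolynomial (Fin N) ℂ) ^ d i := by
    rw [hPart, Finset.filter_true_of_mem]
    intro d _ j hj
    exact absurd (Finset.mem_univ j) hj
  rw [hsymP, ← Finset.sum_filter, hR]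
  refine Finset.sum_nbij' (fun m => fun t => ((m t : ℕ)))
    (fun d => fun t => (⟨min (d t) r, Nat.lt_succ_of_le (min_le_right _ _)⟩ : Fin (r+1)))
    ?_ ?_ ?_ ?_ ?_
  · intro m hm
    simp only [Finset.mem_filter, Finset.mem_univ, true_and] at hm
    rw [Finset.Nat.mem_antidiagonalTuple]
    exact hm
  · intro d hd
    rw [Finset.Nat.mem_antidiagonalTuple] at hd
    simp only [Finset.mem_filter, Finset.mem_univ, true_and]
    have hle : ∀ t, d t ≤ r := by
      intro t
      rw [← hd]
      exact Finset.single_le_sum (fun _ _ => Nat.zero_le _) (Finset.mem_univ t)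
    have : ∀ t ∈ Finset.univ, ((⟨min (d t) r, Nat.lt_succ_of_le (min_le_right _ _)⟩ : Fin (r+1)) : ℕ) = d t := by
      intro t _
      simp [min_eq_left (hle t)]
    rw [Finset.sum_congr rfl this, hd]
  · intro m _
    dsimp only
    funext t
    apply Fin.ext
    have : (m t : ℕ) ≤ r := Nat.lt_succ_iff.mp (m t).isLt
    simp [min_eq_left this]
  · intro d hd
    rw [Finset.Nat.mem_antidiagonalTuple] at hd
    have hle : ∀ t, d t ≤ r := by
      intro t
      rw [← hd]
      exact Finset.single_le_sum (fun _ _ => Nat.zero_le _) (Finset.mem_univ t)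
    dsimp only
    funext t
    simp [min_eq_left (hle t)]
  · intro m _; rfl

lemma hsymPZ_eq_hPartZ (N : ℕ) (z : ℤ) : hsymPZ N z = hPartZ N Finset.univ z := by
  rw [hsymPZ, hPartZ, hsymP_eq_hPart_univ]


lemma hPartZ_erase_rec {N : ℕ} {S : Finset (Fin N)} {y : Fin N} (hy : y ∈ S) (z : ℤ) :
    hPartZ N S z = hPartZ N (S.erase y) z + X y * hPartZ N S (z - 1) := by
  rcases lt_trichotomy z 0 with h | h | h
  · rw [hPartZ, if_pos h, hPartZ, if_pos h, hPartZ, if_pos (by omega)]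
    ring
  · subst h
    rw [hPartZ, if_neg (by omega), hPartZ, if_neg (by omega), hPartZ, if_pos (by omega)]
    simp [hPart_zero]
  · have h1 : ¬ (z < 0) := by omega
    have h2 : ¬ (z - 1 < 0) := by omega
    rw [hPartZ, if_neg h1, hPartZ, if_neg h1, hPartZ, if_neg h2]
    have hz : z.toNat = (z - 1).toNat + 1 := by omega
    rw [hz, hPart_erase_rec hy]

/-- uniform insert rule for `eP` -/
lemma eP_insert' {N : ℕ} {S : Finset (Fin N)} {y : Fin N} (hy : y ∉ S) (k : ℕ) :
    eP N (insert y S) k = eP N S k + X y * (if k = 0 then 0 else eP N S (k-1)) := by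
  cases k with
  | zero => simp [eP_zero]
  | succ k => simp [eP_insert hy k]

theorem key_eh {N : ℕ} (S : Finset (Fin N)) (i : Fin N) (hi : i ∉ S) (m : ℤ) :
    ∑ k ∈ Finset.range (N+1),
        (-1 : MvPolynomial (Fin N) ℂ)^k * eP N S k * hPartZ N (insert i S) (m - k)
      = hPartZ N {i} m := by
  induction S using Finset.induction_on generalizing m with
  | empty =>
    rw [Finset.sum_eq_single 0]
    · simp [eP_zero]
    · intro k _ hk
      have : (∅ : Finset (Fin N)).card < k := by
        simp
        omega
      rw [eP_of_card_lt this]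
      ring
    · intro h
      exact absurd (Finset.self_mem_range_succ 0) (by simpa using h)
  | @insert y S hy IH =>
    have hiy : i ≠ y := fun h => hi (h ▸ Finset.mem_insert_self y S)
    have hiS : i ∉ S := fun h => hi (Finset.mem_insert_of_mem h)
    have hyT : y ∈ insert i (insert y S) :=
      Finset.mem_insert_of_mem (Finset.mem_insert_self y S)
    have hTe : (insert i (insert y S)).erase y = insert i S := by
      ext t
      simp only [Finset.mem_erase, Finset.mem_insert]
      constructor
      · rintro ⟨hty, ht | ht | ht⟩
        · exact Or.inl ht
        · exact absurd ht hty
        · exact Or.inr ht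
      · rintro (ht | ht)
        · exact ⟨ht ▸ hiy, Or.inl ht⟩
        · refine ⟨fun c => hy (c ▸ ht), Or.inr (Or.inr ht)⟩
    have hcard : S.card < N := by
      have h1 : (insert i S).card = S.card + 1 := Finset.card_insert_of_notMem hiS
      have h2 : (insert i S).card ≤ N := by
        simpa using Finset.card_le_univ (insert i S)
      omega
    set T := insert i (insert y S) with hT
    have hrec : ∀ z : ℤ, hPartZ N T z = hPartZ N (insert i S) z + X y * hPartZ N T (z-1) := by
      intro z
      rw [← hTe]
      exact hPartZ_erase_rec hyT z
    set B : ℤ → MvPolynomial (Fin N) ℂ := fun z =>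
      ∑ k ∈ Finset.range (N+1), (-1 : MvPolynomial (Fin N) ℂ)^k * eP N S k * hPartZ N T (z - k)
      with hB
    have hBrec : ∀ z : ℤ, B z = hPartZ N {i} z + X y * B (z - 1) := by
      intro z
      have step : B z = ∑ k ∈ Finset.range (N+1),
          ((-1 : MvPolynomial (Fin N) ℂ)^k * eP N S k * hPartZ N (insert i S) (z - k)
            + X y * ((-1 : MvPolynomial (Fin N) ℂ)^k * eP N S k * hPartZ N T (z - 1 - k))) := by
        refine Finset.sum_congr rfl fun k _ => ?_
        rw [hrec (z - k)]
        have : z - k - 1 = z - 1 - k := by ring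
        rw [this]
        ring
      rw [step, Finset.sum_add_distrib, IH hiS z, ← Finset.mul_sum]
    -- now the main computation
    have hmain : ∑ k ∈ Finset.range (N+1),
        (-1 : MvPolynomial (Fin N) ℂ)^k * eP N (insert y S) k * hPartZ N T (m - k)
        = B m - X y * B (m - 1) := by
      have expand : ∀ k ∈ Finset.range (N+1),
          (-1 : MvPolynomial (Fin N) ℂ)^k * eP N (insert y S) k * hPartZ N T (m - k)
          = (-1 : MvPolynomial (Fin N) ℂ)^k * eP N S k * hPartZ N T (m - k)
            + X y * ((-1 : MvPolynomial (Fin N) ℂ)^k *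
              (if k = 0 then 0 else eP N S (k-1)) * hPartZ N T (m - k)) := by
        intro k _
        rw [eP_insert' hy k]
        ring
      rw [Finset.sum_congr rfl expand, Finset.sum_add_distrib, ← Finset.mul_sum]
      have hBdef : ∀ z : ℤ, B z = ∑ k ∈ Finset.range (N+1),
          (-1 : MvPolynomial (Fin N) ℂ)^k * eP N S k * hPartZ N T (z - k) := fun z => rfl
      have hBm1 : B (m - 1) = ∑ k ∈ Finset.range N,
          (-1 : MvPolynomial (Fin N) ℂ)^k * eP N S k * hPartZ N T (m - 1 - k) := by
        rw [hBdef, Finset.sum_range_succ, eP_of_card_lt hcard]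
        ring
      have shift : ∑ k ∈ Finset.range (N+1),
          (-1 : MvPolynomial (Fin N) ℂ)^k * (if k = 0 then 0 else eP N S (k-1))
            * hPartZ N T (m - k)
          = - B (m - 1) := by
        rw [hBm1, Finset.sum_range_succ' (fun k =>
          (-1 : MvPolynomial (Fin N) ℂ)^k * (if k = 0 then 0 else eP N S (k-1))
            * hPartZ N T (m - k)) N]
        have hg0 : ((-1 : MvPolynomial (Fin N) ℂ)^(0:ℕ) * (if (0:ℕ) = 0 then 0 else eP N S (0-1)))
            * hPartZ N T (m - ((0:ℕ):ℤ)) = 0 := by simp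
        rw [hg0, add_zero, ← Finset.sum_neg_distrib]
        refine Finset.sum_congr rfl fun x _ => ?_
        have harg : m - ((x + 1 : ℕ) : ℤ) = m - 1 - x := by push_cast; ring
        rw [harg]
        rw [if_neg (Nat.succ_ne_zero x)]
        simp only [Nat.add_sub_cancel, pow_succ]
        ring
      rw [shift]
      ring
    rw [hmain, hBrec m]
    ring


lemma key_dagger {N : ℕ} (i : Fin N) (m : ℕ) :
    (X i : MvPolynomial (Fin N) ℂ) ^ m
      = ∑ k ∈ Finset.range N,
          (-1 : MvPolynomial (Fin N) ℂ)^k * eP N (Finset.univ.erase i) k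
            * hsymPZ N ((m : ℤ) - k) := by
  have h := key_eh (Finset.univ.erase i) i (Finset.notMem_erase i _) (m : ℤ)
  rw [Finset.insert_erase (Finset.mem_univ i)] at h
  have hR : hPartZ N {i} (m : ℤ) = (X i : MvPolynomial (Fin N) ℂ) ^ m := by
    rw [hPartZ, if_neg (by omega), Int.toNat_natCast, hPart_singleton]
  rw [hR] at h
  rw [← h, Finset.sum_range_succ]
  have hcard : (Finset.univ.erase i).card < N := by
    rw [Finset.card_erase_of_mem (Finset.mem_univ i)]
    have : (Finset.univ : Finset (Fin N)).card = N := by simp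
    have hN : 0 < N := i.pos
    omega
  rw [eP_of_card_lt hcard]
  have : ∀ k ∈ Finset.range N,
      (-1 : MvPolynomial (Fin N) ℂ)^k * eP N (Finset.univ.erase i) k
            * hsymPZ N ((m : ℤ) - k)
      = (-1 : MvPolynomial (Fin N) ℂ)^k * eP N (Finset.univ.erase i) k
            * hPartZ N Finset.univ ((m : ℤ) - k) := by
    intro k _
    rw [hsymPZ_eq_hPartZ]
  rw [Finset.sum_congr rfl this]
  ring

lemma hsymP_zero (N : ℕ) : hsymP N 0 = 1 := by
  rw [hsymP_eq_hPart_univ, hPart_zero]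


section Matrices
variable (N : ℕ)

noncomputable def AltM (lam : Fin N → ℕ) : Matrix (Fin N) (Fin N) (MvPolynomial (Fin N) ℂ) :=
  Matrix.of fun i j : Fin N => (X i : MvPolynomial (Fin N) ℂ) ^ (lam j + (N - 1 - (j : ℕ)))

noncomputable def EM : Matrix (Fin N) (Fin N) (MvPolynomial (Fin N) ℂ) :=
  Matrix.of fun i k : Fin N =>
    (-1 : MvPolynomial (Fin N) ℂ)^(k : ℕ) * eP N (Finset.univ.erase i) (k : ℕ)

noncomputable def HM (lam : Fin N → ℕ) : Matrix (Fin N) (Fin N) (MvPolynomial (Fin N) ℂ) :=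
  Matrix.of fun k j : Fin N =>
    hsymPZ N (((lam j + (N - 1 - (j : ℕ)) : ℕ) : ℤ) - (k : ℕ))

noncomputable def JT (lam : Fin N → ℕ) : Matrix (Fin N) (Fin N) (MvPolynomial (Fin N) ℂ) :=
  Matrix.of fun i j : Fin N => hsymPZ N ((lam i : ℤ) + (j : ℤ) - (i : ℤ))

lemma schurP_eq_det_JT (lam : Fin N → ℕ) : schurP N lam = (JT N lam).det := rfl

lemma AltM_factor (lam : Fin N → ℕ) : AltM N lam = EM N * HM N lam := by
  refine Matrix.ext fun i j => ?_
  rw [Matrix.mul_apply]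
  show (X i : MvPolynomial (Fin N) ℂ) ^ (lam j + (N - 1 - (j : ℕ))) = _
  rw [key_dagger i (lam j + (N - 1 - (j : ℕ))), ← Fin.sum_univ_eq_sum_range]
  rfl

lemma HM_eq_submatrix (lam : Fin N → ℕ) :
    HM N lam = (Matrix.transpose (JT N lam)).submatrix (⇑(Fin.revPerm : Equiv.Perm (Fin N))) id := by
  refine Matrix.ext fun k j => ?_
  show hsymPZ N (((lam j + (N - 1 - (j : ℕ)) : ℕ) : ℤ) - (k : ℕ))
    = hsymPZ N ((lam j : ℤ) + ((Fin.rev k : Fin N) : ℤ) - (j : ℤ))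
  congr 1
  have hj := j.isLt
  have hk := k.isLt
  have hrev : ((Fin.rev k : Fin N) : ℕ) = N - (k + 1) := Fin.val_rev k
  omega

lemma det_HM (lam : Fin N → ℕ) :
    (HM N lam).det
      = ((Equiv.Perm.sign (Fin.revPerm : Equiv.Perm (Fin N)) : ℤ) : MvPolynomial (Fin N) ℂ)
          * schurP N lam := by
  rw [HM_eq_submatrix, Matrix.det_permute, Matrix.det_transpose, schurP_eq_det_JT]

lemma det_JT_zero : (JT N (fun _ => 0)).det = 1 := by
  rw [Matrix.det_of_upperTriangular]
  · have hdiag : ∀ i : Fin N, (JT N (fun _ => 0)) i i = 1 := by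
      intro i
      show hsymPZ N (((0:ℕ) : ℤ) + (i : ℤ) - (i : ℤ)) = 1
      have : ((0:ℕ) : ℤ) + (i : ℤ) - (i : ℤ) = 0 := by ring
      rw [this, hsymPZ, if_neg (by omega)]
      simpa using hsymP_zero N
    rw [Finset.prod_congr rfl (fun i _ => hdiag i), Finset.prod_const_one]
  · intro i j hij
    show hsymPZ N (((0:ℕ) : ℤ) + (j : ℤ) - (i : ℤ)) = 0
    rw [hsymPZ, if_pos]
    have : (j : ℤ) < (i : ℤ) := by exact_mod_cast hij
    omega

lemma AltM_zero_eq :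
    AltM N (fun _ => 0)
      = (Matrix.vandermonde fun i : Fin N => (X i : MvPolynomial (Fin N) ℂ)).submatrix
          id (⇑(Fin.revPerm : Equiv.Perm (Fin N))) := by
  refine Matrix.ext fun i j => ?_
  show (X i : MvPolynomial (Fin N) ℂ) ^ ((0:ℕ) + (N - 1 - (j : ℕ)))
    = (X i : MvPolynomial (Fin N) ℂ) ^ ((Fin.rev j : Fin N) : ℕ)
  congr 1
  have hj := j.isLt
  have hrev : ((Fin.rev j : Fin N) : ℕ) = N - (j + 1) := Fin.val_rev j
  omega

lemma det_AltM_zero :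
    (AltM N (fun _ => 0)).det
      = ((Equiv.Perm.sign (Fin.revPerm : Equiv.Perm (Fin N)) : ℤ) : MvPolynomial (Fin N) ℂ)
          * (Matrix.vandermonde fun i : Fin N => (X i : MvPolynomial (Fin N) ℂ)).det := by
  rw [AltM_zero_eq, Matrix.det_permute']

lemma sign_sq :
    ((Equiv.Perm.sign (Fin.revPerm : Equiv.Perm (Fin N)) : ℤ) : MvPolynomial (Fin N) ℂ)
      * ((Equiv.Perm.sign (Fin.revPerm : Equiv.Perm (Fin N)) : ℤ) : MvPolynomial (Fin N) ℂ)
      = 1 := by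
  set u := Equiv.Perm.sign (Fin.revPerm : Equiv.Perm (Fin N))
  have : ((u : ℤ) : MvPolynomial (Fin N) ℂ) * ((u : ℤ) : MvPolynomial (Fin N) ℂ)
      = (((u * u : ℤˣ) : ℤ) : MvPolynomial (Fin N) ℂ) := by push_cast; ring
  rw [this, Int.units_mul_self]
  simp

lemma det_EM :
    (EM N).det = (Matrix.vandermonde fun i : Fin N => (X i : MvPolynomial (Fin N) ℂ)).det := by
  have h0 := AltM_factor N (fun _ => 0)
  have hdet : (AltM N (fun _ => 0)).det = (EM N).det * (HM N (fun _ => 0)).det := by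
    rw [h0, Matrix.det_mul]
  rw [det_AltM_zero, det_HM] at hdet
  have hs1 : schurP N (fun _ => 0) = 1 := by
    rw [schurP_eq_det_JT, det_JT_zero]
  rw [hs1, mul_one] at hdet
  set s := ((Equiv.Perm.sign (Fin.revPerm : Equiv.Perm (Fin N)) : ℤ) : MvPolynomial (Fin N) ℂ)
  have := sign_sq N
  calc (EM N).det = (EM N).det * (s * s) := by rw [this, mul_one]
    _ = ((EM N).det * s) * s := by ring
    _ = (s * (Matrix.vandermonde fun i : Fin N => (X i : MvPolynomial (Fin N) ℂ)).det) * s := by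
        rw [← hdet]
    _ = (Matrix.vandermonde fun i : Fin N => (X i : MvPolynomial (Fin N) ℂ)).det * (s * s) := by
        ring
    _ = _ := by rw [this, mul_one]

lemma det_AltM (lam : Fin N → ℕ) :
    ((Equiv.Perm.sign (Fin.revPerm : Equiv.Perm (Fin N)) : ℤ) : MvPolynomial (Fin N) ℂ)
        * (AltM N lam).det
      = (Matrix.vandermonde fun i : Fin N => (X i : MvPolynomial (Fin N) ℂ)).det
          * schurP N lam := by
  have hdet : (AltM N lam).det = (EM N).det * (HM N lam).det := by
    rw [AltM_factor N lam, Matrix.det_mul]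
  rw [hdet, det_EM, det_HM]
  set s := ((Equiv.Perm.sign (Fin.revPerm : Equiv.Perm (Fin N)) : ℤ) : MvPolynomial (Fin N) ℂ)
  have := sign_sq N
  calc s * ((Matrix.vandermonde fun i : Fin N => (X i : MvPolynomial (Fin N) ℂ)).det
        * (s * schurP N lam))
      = (s * s) * ((Matrix.vandermonde fun i : Fin N => (X i : MvPolynomial (Fin N) ℂ)).det
        * schurP N lam) := by ring
    _ = _ := by rw [this, one_mul]

end Matrices

lemma prod_pairs {N : ℕ} (f : Fin N → Fin N → MvPolynomial (Fin N) ℂ) :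
    ∏ p ∈ Finset.univ.filter (fun p : Fin N × Fin N => p.1 < p.2), f p.1 p.2
      = ∏ i : Fin N, ∏ j ∈ Finset.Ioi i, f i j := by
  rw [Finset.prod_filter]
  rw [← Finset.univ_product_univ, Finset.prod_product]
  refine Finset.prod_congr rfl fun i _ => ?_
  rw [← Finset.prod_filter]
  apply Finset.prod_congr _ (fun _ _ => rfl)
  ext j
  simp

/-- relation between vandP and det vandermonde -/
lemma vandP_eq {N : ℕ} :
    vandP N = (∏ i : Fin N, ∏ j ∈ Finset.Ioi i, (-1 : MvPolynomial (Fin N) ℂ))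
      * (Matrix.vandermonde fun i : Fin N => (X i : MvPolynomial (Fin N) ℂ)).det := by
  rw [Matrix.det_vandermonde, vandP, prod_pairs (fun i j => (X i - X j)),
    ← Finset.prod_mul_distrib]
  refine Finset.prod_congr rfl fun i _ => ?_
  rw [← Finset.prod_mul_distrib]
  refine Finset.prod_congr rfl fun j _ => ?_
  ring


/-- the operator `D_k f = V⁻¹ (Σ_j (u_j ∂/∂u_j)^k)(V f)` has the Schur
polynomials as eigenfunctions with eigenvalue `Σ_i (λ_i + N − i)^k`; equivalently
(multiplying through by the Vandermonde `V`),
`(Σ_j (u_j ∂/∂u_j)^k)(V · s_λ) = (Σ_i (λ_i + N − i)^k) · (V · s_λ)`. -/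
theorem schur_eigenfunction_of_Dk
    (N k : ℕ) (lam : Fin N → ℕ) (hlam : Antitone lam) :
    ∑ j : Fin N, (eulerOp N j)^[k] (vandP N * schurP N lam)
      = C ((∑ i : Fin N, ((lam i + (N - 1 - (i : ℕ)))^k : ℕ) : ℂ)) *
          (vandP N * schurP N lam) := by
  classical
  set c₀ : ℂ := (∏ i : Fin N, ∏ j ∈ Finset.Ioi i, (-1 : ℂ))
      * ((Equiv.Perm.sign (Fin.revPerm : Equiv.Perm (Fin N)) : ℤ) : ℂ) with hc₀
  have hCprod : (C (∏ i : Fin N, ∏ j ∈ Finset.Ioi i, (-1 : ℂ)) : MvPolynomial (Fin N) ℂ)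
      = ∏ i : Fin N, ∏ j ∈ Finset.Ioi i, (-1 : MvPolynomial (Fin N) ℂ) := by
    rw [map_prod]
    refine Finset.prod_congr rfl fun i _ => ?_
    rw [map_prod]
    refine Finset.prod_congr rfl fun j _ => ?_
    simp
  have hCs : (C ((Equiv.Perm.sign (Fin.revPerm : Equiv.Perm (Fin N)) : ℤ) : ℂ)
        : MvPolynomial (Fin N) ℂ)
      = ((Equiv.Perm.sign (Fin.revPerm : Equiv.Perm (Fin N)) : ℤ) : MvPolynomial (Fin N) ℂ) := by
    rw [map_intCast]
  have hc : vandP N * schurP N lam = C c₀ * (AltM N lam).det := by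
    rw [hc₀, map_mul, hCprod, hCs, vandP_eq, mul_assoc, mul_assoc]
    congr 1
    rw [det_AltM]
  have hpull : ∀ j : Fin N, ∀ f, (eulerOp N j)^[k] (C c₀ * f)
      = C c₀ * (eulerOp N j)^[k] f := by
    intro j f
    rw [eulerOp_iterate_eq, ← smul_eq_C_mul, map_smul ((eulerLM N j) ^ k), smul_eq_C_mul,
      eulerOp_iterate_eq]
  have heig := eig_det (fun j : Fin N => lam j + (N - 1 - (j : ℕ))) k
  have hAlt : (Matrix.of fun i j : Fin N =>
      (X i : MvPolynomial (Fin N) ℂ) ^ (lam j + (N - 1 - (j : ℕ)))).det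
      = (AltM N lam).det := rfl
  rw [hAlt] at heig
  have hcast : C ((∑ i : Fin N, ((lam i + (N - 1 - (i : ℕ)))^k : ℕ) : ℂ))
      = (C (∑ i : Fin N, ((lam i + (N - 1 - (i : ℕ)) : ℕ) : ℂ) ^ k) : MvPolynomial (Fin N) ℂ) := by
    congr 1
    push_cast
    rfl
  calc ∑ j : Fin N, (eulerOp N j)^[k] (vandP N * schurP N lam)
      = ∑ j : Fin N, (eulerOp N j)^[k] (C c₀ * (AltM N lam).det) := by rw [hc]
    _ = ∑ j : Fin N, C c₀ * (eulerOp N j)^[k] ((AltM N lam).det) := by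
        exact Finset.sum_congr rfl fun j _ => hpull j _
    _ = C c₀ * ∑ j : Fin N, (eulerOp N j)^[k] ((AltM N lam).det) := by
        rw [Finset.mul_sum]
    _ = C c₀ * (C (∑ i : Fin N, ((lam i + (N - 1 - (i : ℕ)) : ℕ) : ℂ) ^ k) * (AltM N lam).det) := by
        rw [heig]
    _ = C (∑ i : Fin N, ((lam i + (N - 1 - (i : ℕ)) : ℕ) : ℂ) ^ k) * (C c₀ * (AltM N lam).det) := by
        ring
    _ = _ := by rw [← hc, hcast]
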